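/- Let I, J ⊆ ℝ be nonempty open intervals, let f : ℝ → ℝ and g : ℝ → ℝ be three times continuously differentiable on I and J respectively, let v₁, v₂, v₃ ∈ ℝ with v₁² + v₂² + v₃² = 1, and let λ ∈ ℝ with λ ≠ 0. Suppose that for every x ∈ I and every y ∈ J: f''(x)·g''(y) = (1 + f'(x)² + g'(y)²)^{3/2}·(v₃ − v₁ f'(x) − v₂ g'(y)) + λ·(1 + f'(x)² + g'(y)²)². Then f''(x) = 0 for every x ∈ I, or g''(y) = 0 for every y ∈ J. -/

import Mathlib

open Filter Topology

noncomputable def Hfun (v₁ v₂ v₃ lam p q : ℝ) : ℝ :=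
  (1 + p ^ 2 + q ^ 2) ^ ((3 : ℝ) / 2) * (v₃ - v₁ * p - v₂ * q)
    + lam * (1 + p ^ 2 + q ^ 2) ^ 2

lemma rpow_threehalves (w : ℝ) (hw : 0 ≤ w) :
    w ^ ((3 : ℝ) / 2) = Real.sqrt w ^ 3 := by
  rw [Real.sqrt_eq_rpow, ← Real.rpow_natCast (w ^ ((1:ℝ)/2)) 3, ← Real.rpow_mul hw]
  norm_num

lemma Hfun_sqrt (v₁ v₂ v₃ lam p q : ℝ) :
    Hfun v₁ v₂ v₃ lam p q =
      Real.sqrt (1 + p ^ 2 + q ^ 2) ^ 3 * (v₃ - v₁ * p - v₂ * q)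
        + lam * (1 + p ^ 2 + q ^ 2) ^ 2 := by
  unfold Hfun
  rw [rpow_threehalves _ (by positivity)]

lemma sqrt_shift (q p : ℝ) (hp : 0 < p) :
    Real.sqrt ((1 + q ^ 2) * (p⁻¹) ^ 2 + 1) = Real.sqrt (1 + p ^ 2 + q ^ 2) / p := by
  rw [show (1 + q ^ 2) * (p⁻¹) ^ 2 + 1 = (1 + p ^ 2 + q ^ 2) / p ^ 2 by
    field_simp; ring]
  rw [Real.sqrt_div (by positivity), Real.sqrt_sq hp.le]

lemma lim4 (v₁ v₂ v₃ lam q : ℝ) :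
    Tendsto (fun p => Hfun v₁ v₂ v₃ lam p q / p ^ 4) atTop (𝓝 (lam - v₁)) := by
  have hcont : ContinuousAt (fun u : ℝ =>
      Real.sqrt ((1 + q ^ 2) * u ^ 2 + 1) ^ 3 * ((v₃ - v₂ * q) * u - v₁)
        + lam * ((1 + q ^ 2) * u ^ 2 + 1) ^ 2) 0 := by fun_prop
  have h := hcont.tendsto.comp tendsto_inv_atTop_zero
  have h0 : Real.sqrt ((1 + q ^ 2) * (0:ℝ) ^ 2 + 1) ^ 3 * ((v₃ - v₂ * q) * 0 - v₁)
        + lam * ((1 + q ^ 2) * (0:ℝ) ^ 2 + 1) ^ 2 = lam - v₁ := by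
    norm_num
    ring
  rw [h0] at h
  refine h.congr' ?_
  filter_upwards [eventually_gt_atTop (0:ℝ)] with p hp
  simp only [Function.comp]
  rw [sqrt_shift q p hp, Hfun_sqrt]
  have hs : (0:ℝ) < Real.sqrt (1 + p ^ 2 + q ^ 2) := Real.sqrt_pos.mpr (by positivity)
  field_simp
  ring

lemma lim3 (v₂ v₃ lam q : ℝ) :
    Tendsto (fun p => Hfun lam v₂ v₃ lam p q / p ^ 3) atTop (𝓝 (v₃ - v₂ * q)) := by
  have hcont : ContinuousAt (fun u : ℝ =>
      Real.sqrt ((1 + q ^ 2) * u ^ 2 + 1) ^ 3 * (v₃ - v₂ * q)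
        + lam * (1 + q ^ 2) * Real.sqrt ((1 + q ^ 2) * u ^ 2 + 1) ^ 3 * u
          / (1 + Real.sqrt ((1 + q ^ 2) * u ^ 2 + 1))) 0 := by
    apply ContinuousAt.add
    · fun_prop
    · apply ContinuousAt.div
      · fun_prop
      · fun_prop
      · norm_num
  have h := hcont.tendsto.comp tendsto_inv_atTop_zero
  have h0 : Real.sqrt ((1 + q ^ 2) * (0:ℝ) ^ 2 + 1) ^ 3 * (v₃ - v₂ * q)
        + lam * (1 + q ^ 2) * Real.sqrt ((1 + q ^ 2) * (0:ℝ) ^ 2 + 1) ^ 3 * 0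
          / (1 + Real.sqrt ((1 + q ^ 2) * (0:ℝ) ^ 2 + 1)) = v₃ - v₂ * q := by
    norm_num
  rw [h0] at h
  refine h.congr' ?_
  filter_upwards [eventually_gt_atTop (0:ℝ)] with p hp
  simp only [Function.comp]
  rw [sqrt_shift q p hp, Hfun_sqrt]
  set s := Real.sqrt (1 + p ^ 2 + q ^ 2) with hsdef
  have hs : (0:ℝ) < s := Real.sqrt_pos.mpr (by positivity)
  have hs2 : s ^ 2 = 1 + p ^ 2 + q ^ 2 := Real.sq_sqrt (by positivity)
  have hden : 1 + s / p ≠ 0 := by positivity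
  field_simp
  linear_combination (lam*s*(1+p^2+q^2) + lam*p*(s^2+(1+p^2+q^2))) * hs2

lemma lim2 (v₂ lam q : ℝ) :
    Tendsto (fun p => Hfun lam v₂ (v₂ * q) lam p q / p ^ 2) atTop
      (𝓝 (lam * (1 + q ^ 2) / 2)) := by
  have hcont : ContinuousAt (fun u : ℝ =>
      lam * (1 + q ^ 2) * Real.sqrt ((1 + q ^ 2) * u ^ 2 + 1) ^ 3
          / (1 + Real.sqrt ((1 + q ^ 2) * u ^ 2 + 1))) 0 := by
    apply ContinuousAt.div
    · fun_prop
    · fun_prop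
    · norm_num
  have h := hcont.tendsto.comp tendsto_inv_atTop_zero
  have h0 : lam * (1 + q ^ 2) * Real.sqrt ((1 + q ^ 2) * (0:ℝ) ^ 2 + 1) ^ 3
          / (1 + Real.sqrt ((1 + q ^ 2) * (0:ℝ) ^ 2 + 1)) = lam * (1 + q ^ 2) / 2 := by
    norm_num
  rw [h0] at h
  refine h.congr' ?_
  filter_upwards [eventually_gt_atTop (0:ℝ)] with p hp
  simp only [Function.comp]
  rw [sqrt_shift q p hp, Hfun_sqrt]
  set s := Real.sqrt (1 + p ^ 2 + q ^ 2) with hsdef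
  have hs : (0:ℝ) < s := Real.sqrt_pos.mpr (by positivity)
  have hs2 : s ^ 2 = 1 + p ^ 2 + q ^ 2 := Real.sq_sqrt (by positivity)
  have hden : 1 + s / p ≠ 0 := by positivity
  field_simp
  linear_combination (lam*s*(1+p^2+q^2) + lam*p*(s^2+(1+p^2+q^2))) * hs2

lemma limD (v₁ v₂ v₃ lam : ℝ) :
    Tendsto (fun p => Hfun v₁ v₂ v₃ lam p p / p ^ 4) atTop
      (𝓝 (4 * lam - 2 * Real.sqrt 2 * (v₁ + v₂))) := by
  have hcont : ContinuousAt (fun u : ℝ =>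
      Real.sqrt (u ^ 2 + 2) ^ 3 * (v₃ * u - (v₁ + v₂)) + lam * (u ^ 2 + 2) ^ 2) 0 := by
    fun_prop
  have h := hcont.tendsto.comp tendsto_inv_atTop_zero
  have h0 : Real.sqrt ((0:ℝ) ^ 2 + 2) ^ 3 * (v₃ * 0 - (v₁ + v₂)) + lam * ((0:ℝ) ^ 2 + 2) ^ 2
      = 4 * lam - 2 * Real.sqrt 2 * (v₁ + v₂) := by
    have h2 : Real.sqrt 2 ^ 3 = 2 * Real.sqrt 2 := by
      rw [pow_succ, Real.sq_sqrt (by norm_num : (0:ℝ) ≤ 2)]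
    norm_num
    rw [h2]
    ring
  rw [h0] at h
  refine h.congr' ?_
  filter_upwards [eventually_gt_atTop (0:ℝ)] with p hp
  simp only [Function.comp]
  have hS : Real.sqrt ((p⁻¹) ^ 2 + 2) = Real.sqrt (1 + p ^ 2 + p ^ 2) / p := by
    rw [show (p⁻¹) ^ 2 + 2 = (1 + p ^ 2 + p ^ 2) / p ^ 2 by field_simp; ring]
    rw [Real.sqrt_div (by positivity), Real.sqrt_sq hp.le]
  rw [hS, Hfun_sqrt]
  have hs : (0:ℝ) < Real.sqrt (1 + p ^ 2 + p ^ 2) := Real.sqrt_pos.mpr (by positivity)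
  field_simp
  ring


lemma Hfun_symm (v₁ v₂ v₃ lam p q : ℝ) :
    Hfun v₁ v₂ v₃ lam p q = Hfun v₂ v₁ v₃ lam q p := by
  unfold Hfun
  rw [show (1 + p ^ 2 + q ^ 2) = (1 + q ^ 2 + p ^ 2) by ring]
  ring

lemma analytic_rpow32 (φ : ℝ × ℝ → ℝ) (hφ : AnalyticOnNhd ℝ φ Set.univ)
    (hpos : ∀ z, 0 < φ z) :
    AnalyticOnNhd ℝ (fun z => φ z ^ ((3 : ℝ) / 2)) Set.univ := by
  have key : ∀ w : ℝ × ℝ, φ w ^ ((3 : ℝ) / 2)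
      = Complex.reCLM ((Complex.ofRealCLM (φ w)) ^ (((3 : ℝ) / 2 : ℝ) : ℂ)) := by
    intro w
    rw [show (Complex.ofRealCLM (φ w)) = ((φ w : ℝ) : ℂ) from rfl,
      ← Complex.ofReal_cpow (hpos w).le]
    simp
  intro z hz
  have h1 : AnalyticAt ℝ (fun w => Complex.ofRealCLM (φ w)) z :=
    (Complex.ofRealCLM.analyticAt _).comp (hφ z hz)
  have h2 : AnalyticAt ℂ (fun c : ℂ => c ^ (((3 : ℝ) / 2 : ℝ) : ℂ))
      (Complex.ofRealCLM (φ z)) := by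
    apply analyticAt_id.cpow analyticAt_const
    left
    simpa using hpos z
  have h3 : AnalyticAt ℝ (fun w => (Complex.ofRealCLM (φ w)) ^ (((3 : ℝ) / 2 : ℝ) : ℂ)) z :=
    AnalyticAt.comp (g := fun c : ℂ => c ^ (((3 : ℝ) / 2 : ℝ) : ℂ))
      (f := fun w => Complex.ofRealCLM (φ w)) (x := z) (h2.restrictScalars (𝕜 := ℝ)) h1
  have h4 : AnalyticAt ℝ
      (fun w => Complex.reCLM ((Complex.ofRealCLM (φ w)) ^ (((3 : ℝ) / 2 : ℝ) : ℂ))) z :=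
    AnalyticAt.comp (x := z) (Complex.reCLM.analyticAt _) h3
  exact h4.congr (Filter.Eventually.of_forall fun w => (key w).symm)

lemma analytic_Hfun_comp (v₁ v₂ v₃ lam : ℝ) (α β : ℝ × ℝ → ℝ)
    (hα : AnalyticOnNhd ℝ α Set.univ) (hβ : AnalyticOnNhd ℝ β Set.univ) :
    AnalyticOnNhd ℝ (fun z => Hfun v₁ v₂ v₃ lam (α z) (β z)) Set.univ := by
  have hbase : AnalyticOnNhd ℝ (fun z => 1 + α z ^ 2 + β z ^ 2) Set.univ :=
    ((analyticOnNhd_const.add (hα.pow 2)).add (hβ.pow 2))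
  have h32 := analytic_rpow32 _ hbase (fun z => by positivity)
  unfold Hfun
  exact (h32.mul ((analyticOnNhd_const.sub (analyticOnNhd_const.mul hα)).sub
    (analyticOnNhd_const.mul hβ))).add (analyticOnNhd_const.mul (hbase.pow 2))


set_option maxHeartbeats 1000000 in
/-- If `z = f(x) + g(y)` defines a `λ`-translator with `λ ≠ 0` and unit
speed `(v₁, v₂, v₃)`, i.e. `f'' g'' = (1 + f'² + g'²)^{3/2} (v₃ − v₁ f' − v₂ g')
+ λ (1 + f'² + g'²)²` on `I × J`, then `f'' ≡ 0` on `I` or `g'' ≡ 0` on `J`. -/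
theorem translation_translator_is_cylindrical
    (a b c d : ℝ) (hab : a < b) (hcd : c < d)
    (f g : ℝ → ℝ)
    (hf : ContDiffOn ℝ 3 f (Set.Ioo a b))
    (hg : ContDiffOn ℝ 3 g (Set.Ioo c d))
    (v₁ v₂ v₃ lam : ℝ) (hv : v₁ ^ 2 + v₂ ^ 2 + v₃ ^ 2 = 1) (hlam : lam ≠ 0)
    (heq : ∀ x ∈ Set.Ioo a b, ∀ y ∈ Set.Ioo c d,
      deriv (deriv f) x * deriv (deriv g) y =
        (1 + deriv f x ^ 2 + deriv g y ^ 2) ^ ((3 : ℝ) / 2) *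
          (v₃ - v₁ * deriv f x - v₂ * deriv g y)
        + lam * (1 + deriv f x ^ 2 + deriv g y ^ 2) ^ 2) :
    (∀ x ∈ Set.Ioo a b, deriv (deriv f) x = 0) ∨
      (∀ y ∈ Set.Ioo c d, deriv (deriv g) y = 0) := by
  by_contra hcon
  push_neg at hcon
  obtain ⟨⟨x₀, hx₀, hfx⟩, ⟨y₀, hy₀, hgy⟩⟩ := hcon
  set p₀ := deriv f x₀ with hp₀def
  set q₀ := deriv g y₀ with hq₀def
  -- the PDE in terms of Hfun
  have hH : ∀ x ∈ Set.Ioo a b, ∀ y ∈ Set.Ioo c d,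
      Hfun v₁ v₂ v₃ lam (deriv f x) (deriv g y)
        = deriv (deriv f) x * deriv (deriv g) y := by
    intro x hx y hy
    unfold Hfun
    exact (heq x hx y hy).symm
  -- images of deriv f, deriv g are neighborhoods of p₀, q₀
  have himg : ∀ (F : ℝ → ℝ) (A B : ℝ) (x : ℝ), ContDiffOn ℝ 3 F (Set.Ioo A B) →
      x ∈ Set.Ioo A B → deriv (deriv F) x ≠ 0 →
      deriv F '' Set.Ioo A B ∈ 𝓝 (deriv F x) := by
    intro F A B x hF hx hFx
    have hF' : ContDiffOn ℝ 2 (deriv F) (Set.Ioo A B) :=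
      hF.deriv_of_isOpen isOpen_Ioo (by norm_num)
    have hFa : ContDiffAt ℝ 2 (deriv F) x :=
      hF'.contDiffAt (isOpen_Ioo.mem_nhds hx)
    have hsd : HasStrictDerivAt (deriv F) (deriv (deriv F) x) x :=
      hFa.hasStrictDerivAt (by norm_num)
    rw [← hsd.map_nhds_eq hFx]
    exact Filter.image_mem_map (isOpen_Ioo.mem_nhds hx)
  have hU : deriv f '' Set.Ioo a b ∈ 𝓝 p₀ := himg f a b x₀ hf hx₀ hfx
  have hV : deriv g '' Set.Ioo c d ∈ 𝓝 q₀ := himg g c d y₀ hg hy₀ hgy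
  obtain ⟨C, hCdef⟩ : ∃ X : ℝ, X = Hfun v₁ v₂ v₃ lam p₀ q₀ := ⟨_, rfl⟩
  have hC : C = deriv (deriv f) x₀ * deriv (deriv g) y₀ := by
    rw [hCdef]; exact hH x₀ hx₀ y₀ hy₀
  have hCne : C ≠ 0 := by rw [hC]; exact mul_ne_zero hfx hgy
  -- the global identity via analytic continuation
  have key : ∀ p q : ℝ, Hfun v₁ v₂ v₃ lam p q * C
      = Hfun v₁ v₂ v₃ lam p q₀ * Hfun v₁ v₂ v₃ lam p₀ q := by
    have hF : AnalyticOnNhd ℝ (fun z : ℝ × ℝ =>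
        Hfun v₁ v₂ v₃ lam z.1 z.2 * C
          - Hfun v₁ v₂ v₃ lam z.1 q₀ * Hfun v₁ v₂ v₃ lam p₀ z.2) Set.univ := by
      have h1 := analytic_Hfun_comp v₁ v₂ v₃ lam _ _
        (analyticOnNhd_fst (𝕜 := ℝ) (E := ℝ) (F := ℝ))
        (analyticOnNhd_snd (𝕜 := ℝ) (E := ℝ) (F := ℝ))
      have h2 := analytic_Hfun_comp v₁ v₂ v₃ lam _ (fun _ => q₀)
        (analyticOnNhd_fst (𝕜 := ℝ) (E := ℝ) (F := ℝ)) analyticOnNhd_const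
      have h3 := analytic_Hfun_comp v₁ v₂ v₃ lam (fun _ => p₀) _
        analyticOnNhd_const (analyticOnNhd_snd (𝕜 := ℝ) (E := ℝ) (F := ℝ))
      exact (h1.mul analyticOnNhd_const).sub (h2.mul h3)
    have hev : (fun z : ℝ × ℝ =>
        Hfun v₁ v₂ v₃ lam z.1 z.2 * C
          - Hfun v₁ v₂ v₃ lam z.1 q₀ * Hfun v₁ v₂ v₃ lam p₀ z.2) =ᶠ[𝓝 (p₀, q₀)] 0 := by
      filter_upwards [prod_mem_nhds hU hV] with z hz
      obtain ⟨⟨x, hx, hz1⟩, ⟨y, hy, hz2⟩⟩ := hz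
      simp only [Pi.zero_apply]
      rw [← hz1, ← hz2, hH x hx y hy, hH x hx y₀ hy₀, hH x₀ hx₀ y hy, hC]
      ring
    have := hF.eqOn_zero_of_preconnected_of_eventuallyEq_zero
      isPreconnected_univ (Set.mem_univ (p₀, q₀)) hev
    intro p q
    have h0 := this (Set.mem_univ (p, q))
    simpa [sub_eq_zero] using h0
  -- zero limits of constants over powers
  have hzero : ∀ (k : ℕ), k ≠ 0 → ∀ e : ℝ,
      Tendsto (fun p : ℝ => e / p ^ k) atTop (𝓝 0) := fun k hk e =>
    tendsto_const_nhds.div_atTop (tendsto_pow_atTop hk)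
  -- consequence of dividing the identity by p^4 and letting p → ∞
  have hA : ∀ q : ℝ, (lam - v₁) * C = (lam - v₁) * Hfun v₁ v₂ v₃ lam p₀ q := by
    intro q
    have t1 := (lim4 v₁ v₂ v₃ lam q).mul_const C
    have t2 := (lim4 v₁ v₂ v₃ lam q₀).mul_const (Hfun v₁ v₂ v₃ lam p₀ q)
    refine tendsto_nhds_unique (t1.congr fun p => ?_) t2
    rw [div_mul_eq_mul_div, div_mul_eq_mul_div, key p q]
  have hB : ∀ p : ℝ, (lam - v₂) * C = Hfun v₁ v₂ v₃ lam p q₀ * (lam - v₂) := by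
    intro p
    have t1 := (lim4 v₂ v₁ v₃ lam p).mul_const C
    have t2 := (lim4 v₂ v₁ v₃ lam p₀).const_mul (Hfun v₁ v₂ v₃ lam p q₀)
    refine tendsto_nhds_unique (t1.congr fun q => ?_) t2
    rw [div_mul_eq_mul_div, ← Hfun_symm v₁ v₂ v₃ lam p q, key p q,
      Hfun_symm v₁ v₂ v₃ lam p₀ q, mul_div_assoc]
  by_cases h1 : v₁ = lam
  · subst h1
    by_cases h2 : v₂ = v₁
    · subst h2
      -- diagonal argument
      have hsymm' : ∀ p q : ℝ, Hfun v₂ v₂ v₃ v₂ p q = Hfun v₂ v₂ v₃ v₂ q p :=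
        fun p q => Hfun_symm v₂ v₂ v₃ v₂ p q
      have hL := limD v₂ v₂ v₃ v₂
      have h3a := lim3 v₂ v₃ v₂ q₀
      have h3b := (lim3 v₂ v₃ v₂ p₀).congr
        (fun p => by rw [hsymm' p p₀])
      have S6 := hL.mul (hzero 2 (by norm_num) C)
      rw [mul_zero] at S6
      have T6 := h3a.mul h3b
      have hev6 : (fun p => Hfun v₂ v₂ v₃ v₂ p p / p ^ 4 * (C / p ^ 2))
          =ᶠ[atTop] fun p => Hfun v₂ v₂ v₃ v₂ p q₀ / p ^ 3
              * (Hfun v₂ v₂ v₃ v₂ p₀ p / p ^ 3) := by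
        filter_upwards [eventually_gt_atTop (0:ℝ)] with p hp
        have hpne : p ≠ 0 := hp.ne'
        field_simp
        linear_combination key p p
      have hprod : (0:ℝ) = (v₃ - v₂ * q₀) * (v₃ - v₂ * p₀) :=
        tendsto_nhds_unique (S6.congr' hev6) T6
      by_cases hq : v₃ - v₂ * q₀ = 0
      · have hq' : v₃ = v₂ * q₀ := by linarith
        have h2a := lim2 v₂ v₂ q₀
        rw [← hq'] at h2a
        by_cases hp : v₃ - v₂ * p₀ = 0
        · have hp' : v₃ = v₂ * p₀ := by linarith
          have h2b := (lim2 v₂ v₂ p₀).congr (fun p => by rw [Hfun_symm])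
          rw [← hp'] at h2b
          have S4 := hL.mul_const C
          have T4 := h2a.mul h2b
          have hev4 : (fun p => Hfun v₂ v₂ v₃ v₂ p p / p ^ 4 * C)
              =ᶠ[atTop] fun p => Hfun v₂ v₂ v₃ v₂ p q₀ / p ^ 2
                  * (Hfun v₂ v₂ v₃ v₂ p₀ p / p ^ 2) := by
            filter_upwards [eventually_gt_atTop (0:ℝ)] with p hp
            have hpne : p ≠ 0 := hp.ne'
            field_simp
            linear_combination key p p
          have heq4 : (4 * v₂ - 2 * Real.sqrt 2 * (v₂ + v₂)) * C
              = v₂ * (1 + q₀ ^ 2) / 2 * (v₂ * (1 + p₀ ^ 2) / 2) :=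
            tendsto_nhds_unique (S4.congr' hev4) T4
          have hpq : p₀ = q₀ := by
            have : v₂ * p₀ = v₂ * q₀ := by rw [← hp', hq']
            exact mul_left_cancel₀ hlam this
          -- compute C explicitly
          have hCval : C = Real.sqrt (1 + p₀ ^ 2 + q₀ ^ 2) ^ 3 * (v₃ - v₂ * p₀ - v₂ * q₀)
              + v₂ * (1 + p₀ ^ 2 + q₀ ^ 2) ^ 2 := by
            rw [hCdef]; exact Hfun_sqrt v₂ v₂ v₃ v₂ p₀ q₀
          set s := Real.sqrt (1 + p₀ ^ 2 + q₀ ^ 2) with hsdef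
          have hs2 : s ^ 2 = 1 + p₀ ^ 2 + q₀ ^ 2 := Real.sq_sqrt (by positivity)
          have hspos : 0 < s := Real.sqrt_pos.mpr (by positivity)
          have hsp : p₀ < s := by nlinarith [sq_nonneg (s - p₀), sq_nonneg (s + p₀), sq_nonneg q₀]
          have hsqrt2 : 1 < Real.sqrt 2 := by
            rw [show (1:ℝ) = Real.sqrt 1 by simp]
            exact Real.sqrt_lt_sqrt (by norm_num) (by norm_num)
          rw [hpq] at hs2
          have hCs : C = v₂ * (s ^ 3 * (s - q₀)) := by
            rw [hCval, hpq]
            linear_combination s ^ 3 * hq' - v₂ * (s ^ 2 + (1 + q₀ ^ 2 + q₀ ^ 2)) * hs2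
          rw [hpq] at hsp
          have hv2sq : 0 < v₂ ^ 2 := lt_of_le_of_ne (sq_nonneg v₂) (Ne.symm (pow_ne_zero 2 hlam))
          have hpos1 : 0 < v₂ ^ 2 * (s ^ 3 * (s - q₀)) :=
            mul_pos hv2sq (mul_pos (pow_pos hspos 3) (sub_pos.mpr hsp))
          rw [hCs, hpq] at heq4
          nlinarith [mul_pos hpos1 (sub_pos.mpr hsqrt2), sq_nonneg (v₂ * (1 + q₀ ^ 2))]
        · -- v₃ ≠ v₂ p₀ : divide by p^5
          have S5 := hL.mul ((tendsto_const_nhds.div_atTop tendsto_id : Tendsto (fun p : ℝ => C / p) atTop (𝓝 0)))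
          rw [mul_zero] at S5
          have T5 := h2a.mul h3b
          have hev5 : (fun p => Hfun v₂ v₂ v₃ v₂ p p / p ^ 4 * (C / p))
              =ᶠ[atTop] fun p => Hfun v₂ v₂ v₃ v₂ p q₀ / p ^ 2
                  * (Hfun v₂ v₂ v₃ v₂ p₀ p / p ^ 3) := by
            filter_upwards [eventually_gt_atTop (0:ℝ)] with p hp
            have hpne : p ≠ 0 := hp.ne'
            field_simp
            linear_combination key p p
          have h0 : (0:ℝ) = v₂ * (1 + q₀ ^ 2) / 2 * (v₃ - v₂ * p₀) :=
            tendsto_nhds_unique (S5.congr' hev5) T5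
          have hne : v₂ * (1 + q₀ ^ 2) / 2 * (v₃ - v₂ * p₀) ≠ 0 := by
            apply mul_ne_zero _ hp
            apply div_ne_zero (mul_ne_zero hlam (by positivity)) two_ne_zero
          exact hne h0.symm
      · -- v₃ ≠ v₂ q₀, so v₃ = v₂ p₀
        have hp : v₃ - v₂ * p₀ = 0 := by
          rcases mul_eq_zero.mp hprod.symm with h | h
          · exact absurd h hq
          · exact h
        have hp' : v₃ = v₂ * p₀ := by linarith
        have h2b := (lim2 v₂ v₂ p₀).congr (fun p => by rw [Hfun_symm])
        rw [← hp'] at h2b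
        have S5 := hL.mul ((tendsto_const_nhds.div_atTop tendsto_id : Tendsto (fun p : ℝ => C / p) atTop (𝓝 0)))
        rw [mul_zero] at S5
        have T5 := h3a.mul h2b
        have hev5 : (fun p => Hfun v₂ v₂ v₃ v₂ p p / p ^ 4 * (C / p))
            =ᶠ[atTop] fun p => Hfun v₂ v₂ v₃ v₂ p q₀ / p ^ 3
                * (Hfun v₂ v₂ v₃ v₂ p₀ p / p ^ 2) := by
          filter_upwards [eventually_gt_atTop (0:ℝ)] with p hp
          have hpne : p ≠ 0 := hp.ne'
          field_simp
          linear_combination key p p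
        have h0 : (0:ℝ) = (v₃ - v₂ * q₀) * (v₂ * (1 + p₀ ^ 2) / 2) :=
          tendsto_nhds_unique (S5.congr' hev5) T5
        have hne : (v₃ - v₂ * q₀) * (v₂ * (1 + p₀ ^ 2) / 2) ≠ 0 := by
          apply mul_ne_zero hq
          apply div_ne_zero (mul_ne_zero hlam (by positivity)) two_ne_zero
        exact hne h0.symm
    · -- v₂ ≠ v₁ = lam
      have hsub2 : v₁ - v₂ ≠ 0 := sub_ne_zero.mpr (Ne.symm h2)
      have hconst2 : ∀ p : ℝ, Hfun v₁ v₂ v₃ v₁ p q₀ = C := by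
        intro p
        have := hB p
        rw [mul_comm (Hfun v₁ v₂ v₃ v₁ p q₀) _] at this
        exact (mul_left_cancel₀ hsub2 this).symm
      have w1 := (lim3 v₂ v₃ v₁ q₀).congr (fun p => by rw [hconst2 p])
      have hv₃ : v₃ - v₂ * q₀ = 0 :=
        tendsto_nhds_unique w1 (hzero 3 (by norm_num) C)
      have hv₃' : v₃ = v₂ * q₀ := by linarith
      have w2 := lim2 v₂ v₁ q₀
      rw [← hv₃'] at w2
      have w2' := w2.congr (fun p => by rw [hconst2 p])
      have h0 : v₁ * (1 + q₀ ^ 2) / 2 = 0 :=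
        tendsto_nhds_unique w2' (hzero 2 (by norm_num) C)
      have : v₁ * (1 + q₀ ^ 2) = 0 := by linarith
      exact (mul_ne_zero hlam (by positivity : (1:ℝ) + q₀ ^ 2 ≠ 0)) this
  · -- v₁ ≠ lam
    have hsub : lam - v₁ ≠ 0 := sub_ne_zero.mpr (Ne.symm h1)
    have hconst : ∀ q : ℝ, Hfun v₁ v₂ v₃ lam p₀ q = C :=
      fun q => (mul_left_cancel₀ hsub (hA q)).symm
    have u1 := (lim4 v₂ v₁ v₃ lam p₀).congr
      (fun q => by rw [← Hfun_symm v₁ v₂ v₃ lam p₀ q, hconst q])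
    have hv2 : lam - v₂ = 0 :=
      tendsto_nhds_unique u1 (hzero 4 (by norm_num) C)
    have hv2' : v₂ = lam := by linarith
    subst hv2'
    have u2 := (lim3 v₁ v₃ v₂ p₀).congr
      (fun q => by rw [← Hfun_symm v₁ v₂ v₃ v₂ p₀ q, hconst q])
    have hv₃ : v₃ - v₁ * p₀ = 0 :=
      tendsto_nhds_unique u2 (hzero 3 (by norm_num) C)
    have hv₃' : v₃ = v₁ * p₀ := by linarith
    have u3 := lim2 v₁ v₂ p₀
    rw [← hv₃'] at u3
    have u3' := u3.congr
      (fun q => by rw [← Hfun_symm v₁ v₂ v₃ v₂ p₀ q, hconst q])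
    have h0 : v₂ * (1 + p₀ ^ 2) / 2 = 0 :=
      tendsto_nhds_unique u3' (hzero 2 (by norm_num) C)
    have : v₂ * (1 + p₀ ^ 2) = 0 := by linarith
    exact (mul_ne_zero hlam (by positivity : (1:ℝ) + p₀ ^ 2 ≠ 0)) this
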